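/- The graph-connectivity condition implies feasibility: if there exist indices I_1, ..., I_N ∈ {1,...,M} with ‖u_0 − g_{I_1}‖ ≤ d, ‖u_F − g_{I_N}‖ ≤ d, and ‖g_{I_{i+1}} − g_{I_i}‖ ≤ 2d for i = 1,...,N−1 (with consecutive g's distinct and d > 0), then there exists a continuous (piecewise-linear) path u : [0,1] → ℝ² from u_0 to u_F such that min_{1≤m≤M} ‖u(t) − g_m‖ ≤ d for all t ∈ [0,1]. -/

import Mathlib

lemma seg_close_aux {E : Type*} [NormedAddCommGroup E] [NormedSpace ℝ E]
    {x y z : E} (hz : z ∈ segment ℝ x y) :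
    ∃ a b : ℝ, 0 ≤ a ∧ 0 ≤ b ∧ a + b = 1 ∧
      ‖z - y‖ = a * ‖x - y‖ ∧ ‖z - x‖ = b * ‖y - x‖ := by
  obtain ⟨a, b, ha, hb, hab, rfl⟩ := hz
  have hb1 : b = 1 - a := by linarith
  subst hb1
  refine ⟨a, 1 - a, ha, hb, hab, ?_, ?_⟩
  · have h : a • x + (1 - a) • y - y = a • (x - y) := by module
    rw [h, norm_smul, Real.norm_of_nonneg ha]
  · have h : a • x + (1 - a) • y - x = (1 - a) • (y - x) := by module
    rw [h, norm_smul, Real.norm_of_nonneg hb]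

theorem association_sequence_implies_feasible_path
    (M : ℕ) (hM : 0 < M) (d : ℝ) (hd : 0 < d)
    (u0 uF : EuclideanSpace ℝ (Fin 2))
    (g : Fin M → EuclideanSpace ℝ (Fin 2))
    (N : ℕ) (hN : 1 ≤ N) (I : ℕ → Fin M)
    (h0 : ‖u0 - g (I 1)‖ ≤ d) (hF : ‖uF - g (I N)‖ ≤ d)
    (hne : ∀ i, 1 ≤ i → i ≤ N - 1 → g (I (i + 1)) ≠ g (I i))
    (hgg : ∀ i, 1 ≤ i → i ≤ N - 1 → ‖g (I (i + 1)) - g (I i)‖ ≤ 2 * d) :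
    ∃ u : ℝ → EuclideanSpace ℝ (Fin 2),
      ContinuousOn u (Set.Icc 0 1) ∧ u 0 = u0 ∧ u 1 = uF ∧
      ∀ t ∈ Set.Icc (0 : ℝ) 1,
        Finset.univ.inf' (Finset.univ_nonempty_iff.mpr ⟨⟨0, hM⟩⟩)
          (fun m => ‖u t - g m‖) ≤ d := by
  set S : Set (EuclideanSpace ℝ (Fin 2)) := {x | ∃ m, ‖x - g m‖ ≤ d} with hS
  -- joining two points whose segment lies in S
  have joined : ∀ x y : EuclideanSpace ℝ (Fin 2), segment ℝ x y ⊆ S →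
      JoinedIn S x y := by
    intro x y hsub
    have hconv : Convex ℝ (segment ℝ x y) := convex_segment x y
    have hpc : IsPathConnected (segment ℝ x y) :=
      hconv.isPathConnected ⟨x, left_mem_segment ℝ x y⟩
    exact (hpc.joinedIn x (left_mem_segment ℝ x y) y
      (right_mem_segment ℝ x y)).mono hsub
  -- segment from a point within d of g m to g m lies in S
  have segA : ∀ (x : EuclideanSpace ℝ (Fin 2)) (m : Fin M), ‖x - g m‖ ≤ d →
      segment ℝ x (g m) ⊆ S := by
    intro x m hx z hz
    obtain ⟨a, b, ha, hb, hab, h1, _⟩ := seg_close_aux hz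
    exact ⟨m, h1 ▸ le_trans (by nlinarith [norm_nonneg (x - g m)]) hx⟩
  -- segment between g's within 2d lies in S
  have segB : ∀ (m m' : Fin M), ‖g m' - g m‖ ≤ 2 * d →
      segment ℝ (g m) (g m') ⊆ S := by
    intro m m' hgm z hz
    obtain ⟨a, b, ha, hb, hab, h1, h2⟩ := seg_close_aux hz
    rcases le_total a (1/2) with h | h
    · refine ⟨m', ?_⟩
      rw [h1]
      calc a * ‖g m - g m'‖ ≤ (1/2) * (2 * d) := by
            rw [norm_sub_rev]
            apply mul_le_mul h hgm (norm_nonneg _) (by norm_num)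
        _ = d := by ring
    · refine ⟨m, ?_⟩
      rw [h2]
      have hb' : b ≤ 1/2 := by linarith
      calc b * ‖g m' - g m‖ ≤ (1/2) * (2 * d) :=
            mul_le_mul hb' hgm (norm_nonneg _) (by norm_num)
        _ = d := by ring
  -- induction: u0 joined to g (I k) for 1 ≤ k ≤ N
  have key : ∀ k, 1 ≤ k → k ≤ N → JoinedIn S u0 (g (I k)) := by
    intro k
    induction k with
    | zero => omega
    | succ k ih =>
      intro _ hkN
      rcases Nat.eq_zero_or_pos k with rfl | hk
      · exact joined _ _ (segA u0 (I 1) h0)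
      · have hk' : k ≤ N - 1 := by omega
        have step : JoinedIn S (g (I k)) (g (I (k + 1))) :=
          joined _ _ (segB (I k) (I (k+1)) (hgg k hk hk'))
        exact (ih hk (by omega)).trans step
  have last : JoinedIn S (g (I N)) uF := by
    have := joined uF (g (I N)) (segA uF (I N) hF)
    exact this.symm
  obtain ⟨γ, hγ⟩ := (key N hN le_rfl).trans last
  refine ⟨γ.extend, γ.continuous_extend.continuousOn, γ.extend_zero, γ.extend_one, ?_⟩
  intro t ht
  obtain ⟨m, hm⟩ : γ.extend t ∈ S := by
    rw [Path.extend_apply γ ht]; exact hγ _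
  exact le_trans (Finset.inf'_le _ (Finset.mem_univ m)) hm
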